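/- Fix q > 0. On the interval (4q, ∞), the function h(X) = X/(12q) - (X - 4q)^{3/2}/(6q·√X) is strictly concave, and its unique maximizer is X* = (8·cos(π/18)/√3)·q. -/

import Mathlib

open Real Set

namespace MBR

variable {q : ℝ}

noncomputable def f (q : ℝ) (X : ℝ) : ℝ := X / (12*q) - (Real.sqrt (X - 4*q))^3 / (6*q*Real.sqrt X)

noncomputable def d (q : ℝ) (X : ℝ) : ℝ :=
  1/(12*q) - Real.sqrt (X - 4*q) * (2*X + 4*q) / (12*q*(X*Real.sqrt X))

lemma rpow_eq (x : ℝ) (hx : 0 ≤ x) : x ^ ((3:ℝ)/2) = (Real.sqrt x)^3 := by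
  rw [Real.sqrt_eq_rpow, ← Real.rpow_natCast (x ^ ((1:ℝ)/2)) 3, ← Real.rpow_mul hx]
  norm_num

lemma F_eq {X : ℝ} (hX : X ∈ Ioi (4*q)) :
    X / (12 * q) - (X - 4 * q) ^ ((3:ℝ)/2) / (6 * q * Real.sqrt X) = f q X := by
  have h : (0:ℝ) ≤ X - 4*q := by have := hX.out; linarith
  rw [f, rpow_eq _ h]

lemma alg (q X s t : ℝ) (hq : 0 < q) (hXpos : 0 < X) (hspos : 0 < s) (htpos : 0 < t)
    (hs2 : s^2 = X - 4*q) (ht2 : t^2 = X) :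
    1/(12*q) - s * (2*X + 4*q) / (12*q*(X*t)) =
    1/(12*q) - (3*s^2*(1/(2*s)) * (6*q*t) - s^3*(6*q*(1/(2*t)))) / (6*q*t)^2 := by
  congr 1
  rw [div_eq_div_iff (by positivity) (by positivity)]
  field_simp
  ring_nf
  linear_combination 12 * (X * hs2 - (X-4*q) * ht2)

lemma hasDerivAt_f (hq : 0 < q) {X : ℝ} (hX : X ∈ Ioi (4*q)) :
    HasDerivAt (f q) (d q X) X := by
  have hX4 : 4*q < X := hX.out
  have hXpos : 0 < X := by linarith
  have hs4 : 0 < X - 4*q := by linarith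
  have hspos : 0 < Real.sqrt (X - 4*q) := Real.sqrt_pos.2 hs4
  have htpos : 0 < Real.sqrt X := Real.sqrt_pos.2 hXpos
  have hs2 : (Real.sqrt (X - 4*q))^2 = X - 4*q := Real.sq_sqrt hs4.le
  have ht2 : (Real.sqrt X)^2 = X := Real.sq_sqrt hXpos.le
  have h1 : HasDerivAt (fun y : ℝ => Real.sqrt (y - 4*q)) (1/(2*Real.sqrt (X - 4*q))) X := by
    have := (Real.hasDerivAt_sqrt (x := X - 4*q) (ne_of_gt hs4)).comp X
      ((hasDerivAt_id X).sub_const (4*q))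
    simpa [Function.comp_def] using this
  have h2 : HasDerivAt (fun y : ℝ => (Real.sqrt (y - 4*q))^3)
      (3*(Real.sqrt (X - 4*q))^2*(1/(2*Real.sqrt (X - 4*q)))) X := by
    simpa using h1.fun_pow 3
  have h3 : HasDerivAt (fun y : ℝ => 6*q*Real.sqrt y) (6*q*(1/(2*Real.sqrt X))) X :=
    (Real.hasDerivAt_sqrt hXpos.ne').const_mul (6*q)
  have hden : 6*q*Real.sqrt X ≠ 0 := by positivity
  have h4 := h2.div h3 hden
  have h5 : HasDerivAt (fun y : ℝ => y / (12*q)) (1/(12*q)) X := by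
    simpa using (hasDerivAt_id X).div_const (12*q)
  have h6 := h5.sub h4
  have key := alg q X (Real.sqrt (X - 4*q)) (Real.sqrt X) hq hXpos hspos htpos hs2 ht2
  rw [d, key]
  exact h6

lemma d_strictAnti (hq : 0 < q) : StrictAntiOn (d q) (Ioi (4*q)) := by
  intro a ha b hb hab
  have ha4 : 4*q < a := ha.out
  have hb4 : 4*q < b := hb.out
  have hapos : 0 < a := by linarith
  have hbpos : 0 < b := by linarith
  set ga := Real.sqrt (a - 4*q) * (2*a + 4*q) / (a*Real.sqrt a) with hga
  set gb := Real.sqrt (b - 4*q) * (2*b + 4*q) / (b*Real.sqrt b) with hgb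
  have hgann : 0 ≤ ga := by positivity
  have hgbnn : 0 ≤ gb := by positivity
  have hsq : ∀ x : ℝ, 4*q < x →
      (Real.sqrt (x - 4*q) * (2*x + 4*q) / (x*Real.sqrt x))^2 = 4 - 48*q^2/x^2 - 64*q^3/x^3 := by
    intro x hx
    have hxpos : 0 < x := by linarith
    have h1 : (Real.sqrt (x - 4*q))^2 = x - 4*q := Real.sq_sqrt (by linarith)
    have h2 : (Real.sqrt x)^2 = x := Real.sq_sqrt hxpos.le
    rw [div_pow, mul_pow, mul_pow, h1, h2]
    rw [div_eq_iff (by positivity)]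
    field_simp
    ring
  have hlt : ga^2 < gb^2 := by
    rw [hga, hgb, hsq a ha4, hsq b hb4]
    have h1 : 48*q^2/b^2 < 48*q^2/a^2 := by
      apply div_lt_div_of_pos_left (by positivity) (by positivity)
      exact pow_lt_pow_left₀ hab hapos.le (by norm_num)
    have h2 : 64*q^3/b^3 < 64*q^3/a^3 := by
      apply div_lt_div_of_pos_left (by positivity) (by positivity)
      exact pow_lt_pow_left₀ hab hapos.le (by norm_num)
    linarith
  have hglt : ga < gb := by
    by_contra h
    push_neg at h
    exact absurd hlt (not_lt.2 (pow_le_pow_left₀ hgbnn h 2))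
  rw [d, d]
  have h12 : 0 < 12*q := by linarith
  have : Real.sqrt (a - 4*q) * (2*a + 4*q) / (12*q*(a*Real.sqrt a)) = ga / (12*q) := by
    rw [hga, div_div, mul_comm (a*Real.sqrt a) (12*q)]
  rw [this]
  have : Real.sqrt (b - 4*q) * (2*b + 4*q) / (12*q*(b*Real.sqrt b)) = gb / (12*q) := by
    rw [hgb, div_div, mul_comm (b*Real.sqrt b) (12*q)]
  rw [this]
  have : ga / (12*q) < gb / (12*q) := by
    apply div_lt_div_of_pos_right hglt h12
  linarith

end MBR

namespace MBR2
open MBR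

noncomputable def xstar (q : ℝ) : ℝ := 8 * Real.cos (Real.pi / 18) / Real.sqrt 3 * q

lemma cos_gt (q : ℝ) : Real.sqrt 3 / 2 < Real.cos (Real.pi / 18) := by
  have h := Real.cos_lt_cos_of_nonneg_of_le_pi (x := Real.pi/18) (y := Real.pi/6)
    (by positivity) (by linarith [Real.pi_pos]) (by linarith [Real.pi_pos])
  rw [Real.cos_pi_div_six] at h
  linarith

lemma xstar_mem (q : ℝ) (hq : 0 < q) : xstar q ∈ Set.Ioi (4*q) := by
  have hr : (0:ℝ) < Real.sqrt 3 := by positivity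
  have hc := cos_gt q
  rw [xstar, Set.mem_Ioi]
  have h4 : (4:ℝ) < 8 * Real.cos (Real.pi / 18) / Real.sqrt 3 := by
    rw [lt_div_iff₀ hr]
    nlinarith
  nlinarith

lemma cube_eq (q : ℝ) (hq : 0 < q) : 3*(xstar q)^3 - 48*q^2*(xstar q) - 64*q^3 = 0 := by
  have hr : (0:ℝ) < Real.sqrt 3 := by positivity
  have hr2 : (Real.sqrt 3)^2 = 3 := Real.sq_sqrt (by norm_num)
  have hcc : 4*(Real.cos (Real.pi/18))^3 - 3*Real.cos (Real.pi/18) = Real.sqrt 3 / 2 := by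
    have h := Real.cos_three_mul (Real.pi/18)
    rw [show 3*(Real.pi/18) = Real.pi/6 by ring, Real.cos_pi_div_six] at h
    linarith
  rw [xstar]
  set c := Real.cos (Real.pi/18)
  set r := Real.sqrt 3
  field_simp
  ring_nf
  linear_combination (-q^3)*((384*c+64*r)*hr2 - 384*hcc)

lemma d_xstar (q : ℝ) (hq : 0 < q) : d q (xstar q) = 0 := by
  set X := xstar q with hXdef
  have hX4 : 4*q < X := xstar_mem q hq
  have hXpos : 0 < X := by linarith
  have hs4 : (0:ℝ) ≤ X - 4*q := by linarith
  have hcube := cube_eq q hq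
  rw [← hXdef] at hcube
  have hpoly : X^3 = (X - 4*q)*(2*X + 4*q)^2 := by linear_combination -hcube
  have h1 : (X*Real.sqrt X)^2 = X^3 := by
    rw [mul_pow, Real.sq_sqrt hXpos.le]; ring
  have h2 : (Real.sqrt (X - 4*q)*(2*X + 4*q))^2 = (X - 4*q)*(2*X + 4*q)^2 := by
    rw [mul_pow, Real.sq_sqrt hs4]
  have hkey : X*Real.sqrt X = Real.sqrt (X - 4*q)*(2*X + 4*q) := by
    have hb : 0 ≤ Real.sqrt (X - 4*q)*(2*X + 4*q) := by positivity
    calc X*Real.sqrt X = Real.sqrt ((X*Real.sqrt X)^2) := (Real.sqrt_sq (by positivity)).symm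
      _ = Real.sqrt ((Real.sqrt (X - 4*q)*(2*X + 4*q))^2) := by rw [h1, hpoly, ← h2]
      _ = Real.sqrt (X - 4*q)*(2*X + 4*q) := Real.sqrt_sq hb
  rw [d, ← hkey]
  have h0 : X*Real.sqrt X ≠ 0 := by positivity
  field_simp
  ring

end MBR2

/-- For `q > 0`, the function `h(X) = X/(12q) - (X-4q)^{3/2}/(6q·√X)` is strictly concave on
`(4q, ∞)` and its unique maximizer there is `X* = (8·cos(π/18)/√3)·q`. -/
theorem midpoint_benefit_ratio_concave_max (q : ℝ) (hq : 0 < q) :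
    StrictConcaveOn ℝ (Set.Ioi (4 * q))
      (fun X : ℝ => X / (12 * q) - (X - 4 * q) ^ ((3:ℝ)/2) / (6 * q * Real.sqrt X)) ∧
    8 * Real.cos (Real.pi / 18) / Real.sqrt 3 * q ∈ Set.Ioi (4 * q) ∧
    (∀ X ∈ Set.Ioi (4 * q), X ≠ 8 * Real.cos (Real.pi / 18) / Real.sqrt 3 * q →
      X / (12 * q) - (X - 4 * q) ^ ((3:ℝ)/2) / (6 * q * Real.sqrt X) <
        (8 * Real.cos (Real.pi / 18) / Real.sqrt 3 * q) / (12 * q) -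
          (8 * Real.cos (Real.pi / 18) / Real.sqrt 3 * q - 4 * q) ^ ((3:ℝ)/2) /
            (6 * q * Real.sqrt (8 * Real.cos (Real.pi / 18) / Real.sqrt 3 * q))) := by
  set F : ℝ → ℝ := fun X : ℝ => X / (12 * q) - (X - 4 * q) ^ ((3:ℝ)/2) / (6 * q * Real.sqrt X)
    with hF
  have hDF : ∀ X ∈ Set.Ioi (4*q), HasDerivAt F (MBR.d q X) X := by
    intro X hX
    refine (MBR.hasDerivAt_f hq hX).congr_of_eventuallyEq ?_
    filter_upwards [Ioi_mem_nhds hX.out] with y hy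
    exact MBR.F_eq hy
  have hderiv : ∀ X ∈ Set.Ioi (4*q), deriv F X = MBR.d q X := fun X hX => (hDF X hX).deriv
  have hcont : ContinuousOn F (Set.Ioi (4*q)) :=
    fun X hX => (hDF X hX).differentiableAt.continuousAt.continuousWithinAt
  have hanti : StrictAntiOn (deriv F) (interior (Set.Ioi (4*q))) := by
    rw [interior_Ioi]
    intro a ha b hb hab
    rw [hderiv a ha, hderiv b hb]
    exact MBR.d_strictAnti hq ha hb hab
  have hconc : StrictConcaveOn ℝ (Set.Ioi (4*q)) F :=
    hanti.strictConcaveOn_of_deriv (convex_Ioi _) hcont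
  have hmem : MBR2.xstar q ∈ Set.Ioi (4*q) := MBR2.xstar_mem q hq
  have hd0 : MBR.d q (MBR2.xstar q) = 0 := MBR2.d_xstar q hq
  refine ⟨hconc, hmem, ?_⟩
  intro X hX hne
  have : F X < F (MBR2.xstar q) := by
    rcases lt_or_gt_of_ne (a := X) (b := MBR2.xstar q) hne with hlt | hgt
    · have hsub : Set.Icc X (MBR2.xstar q) ⊆ Set.Ioi (4*q) :=
        fun y hy => lt_of_lt_of_le hX.out hy.1
      have hmono : StrictMonoOn F (Set.Icc X (MBR2.xstar q)) := by
        apply strictMonoOn_of_deriv_pos (convex_Icc _ _) (hcont.mono hsub)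
        intro y hy
        rw [interior_Icc] at hy
        have hy' : y ∈ Set.Ioi (4*q) := lt_trans hX.out hy.1
        rw [hderiv y hy']
        have := MBR.d_strictAnti hq hy' hmem hy.2
        rw [hd0] at this
        exact this
      exact hmono ⟨le_refl _, hlt.le⟩ ⟨hlt.le, le_refl _⟩ hlt
    · have hsub : Set.Icc (MBR2.xstar q) X ⊆ Set.Ioi (4*q) :=
        fun y hy => lt_of_lt_of_le hmem.out hy.1
      have hantiF : StrictAntiOn F (Set.Icc (MBR2.xstar q) X) := by
        apply strictAntiOn_of_deriv_neg (convex_Icc _ _) (hcont.mono hsub)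
        intro y hy
        rw [interior_Icc] at hy
        have hy' : y ∈ Set.Ioi (4*q) := lt_trans hmem.out hy.1
        rw [hderiv y hy']
        have := MBR.d_strictAnti hq hmem hy' hy.1
        rw [hd0] at this
        exact this
      exact hantiF ⟨le_refl _, hgt.le⟩ ⟨hgt.le, le_refl _⟩ hgt
  exact this
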